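/- Let (A,B) be a resolvent pair in which A, B are tensor categories and the exact faithful functor U : A → B is monoidal. If f : X → X' and g : Y → Y' are allowable morphisms in A, then f ⊗ g : X ⊗ Y → X' ⊗ Y' is allowable. -/

import Mathlib

open CategoryTheory CategoryTheory.Limits

universe v u v' u'

/-- A resolvent pair of abelian categories: an adjunction `F ⊣ U` where the right adjoint
`U : A ⥤ B` is additive, exact and faithful. -/
structure ResolventPair (A : Type u) [Category.{v} A] [Abelian A]
    (B : Type u') [Category.{v'} B] [Abelian B] where
  /-- the left adjoint (e.g. induction) -/
  F : B ⥤ A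
  /-- the right adjoint (e.g. restriction), assumed additive, exact and faithful -/
  U : A ⥤ B
  adj : F ⊣ U
  additive : U.Additive
  preservesFiniteLimits : PreservesFiniteLimits U
  preservesFiniteColimits : PreservesFiniteColimits U
  faithful : U.Faithful

namespace ResolventPair

variable {A : Type u} [Category.{v} A] [Abelian A]
  {B : Type u'} [Category.{v'} B] [Abelian B]

/-- A morphism `f` of `A` is allowable if `U f` admits a quasi-inverse `s`,
i.e. `U f ∘ s ∘ U f = U f`. -/
def Allowable (R : ResolventPair A B) {V W : A} (f : V ⟶ W) : Prop :=
  ∃ s : R.U.obj W ⟶ R.U.obj V, R.U.map f ≫ s ≫ R.U.map f = R.U.map f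

/-- An object `P` of `A` is relatively projective if every lifting problem against an
allowable epimorphism can be solved. -/
def RelProjective (R : ResolventPair A B) (P : A) : Prop :=
  ∀ ⦃V W : A⦄ (f : V ⟶ W), Epi f → R.Allowable f →
    ∀ g : P ⟶ W, ∃ h : P ⟶ V, h ≫ f = g

end ResolventPair

open MonoidalCategory

variable {A : Type u} [Category.{v} A] [Abelian A] {B : Type u'} [Category.{v'} B] [Abelian B]

/-- In a monoidal resolvent pair (the exact faithful right adjoint `U : A ⥤ B` is a monoidal
functor between tensor categories), the tensor product `f ⊗ g` of allowable morphisms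
`f : X ⟶ X'` and `g : Y ⟶ Y'` is allowable. -/
theorem allowable_tensorHom [MonoidalCategory A] [MonoidalCategory B]
    (R : ResolventPair A B) [R.U.Monoidal]
    {X X' Y Y' : A} (f : X ⟶ X') (g : Y ⟶ Y')
    (hf : R.Allowable f) (hg : R.Allowable g) :
    R.Allowable (f ⊗ₘ g) := by
  obtain ⟨s, hs⟩ := hf
  obtain ⟨t, ht⟩ := hg
  refine ⟨Functor.OplaxMonoidal.δ R.U X' Y' ≫ (s ⊗ₘ t) ≫ Functor.LaxMonoidal.μ R.U X Y, ?_⟩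
  have hmap : ∀ {P Q P' Q' : A} (u : P ⟶ P') (v : Q ⟶ Q'),
      R.U.map (u ⊗ₘ v) = Functor.OplaxMonoidal.δ R.U P Q ≫ (R.U.map u ⊗ₘ R.U.map v) ≫
        Functor.LaxMonoidal.μ R.U P' Q' := by
    intro P Q P' Q' u v
    simp [← Functor.LaxMonoidal.μ_natural]
  rw [hmap]
  simp only [Category.assoc, Functor.Monoidal.μ_δ_assoc]
  rw [tensorHom_comp_tensorHom_assoc, tensorHom_comp_tensorHom_assoc]
  simp only [Category.assoc, hs, ht]
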